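/- Fix integers ℓ ≥ 2 and k ≥ 2, and consider the instance with ℓ flow-shop jobs each of processing time 1/(ℓ−1), and k+1 open-shop jobs: one of processing time 1 and k of processing time 1/(k−1) each. Then there exists a feasible schedule with makespan exactly P(F) + Q(O) = 3 + 1/(ℓ−1) + 1/(k−1); since every feasible schedule has makespan at least P(F) + Q(O), this schedule is optimal. -/

import Mathlib

open Finset

noncomputable section

/-- Processing time of a job: `p` on flow-shop jobs, `q` otherwise. -/
def jobTime {J : Type*} [DecidableEq J] (F : Finset J) (p q : J → ℝ) (j : J) : ℝ :=
  if j ∈ F then p j else q j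

/-- Feasibility of a schedule given by start times `S j i` of job `j` on machine `i`
(machines `M1, M2, M3` are machines `0, 1, 2`):
all start times are nonnegative, on each machine the open processing intervals of
distinct jobs are pairwise disjoint, for each job the open processing intervals on the
three machines are pairwise disjoint, and each flow-shop job goes through
`M1`, `M2`, `M3` in this order. -/
def Feasible {J : Type*} [DecidableEq J] (F O : Finset J) (p q : J → ℝ)
    (S : J → Fin 3 → ℝ) : Prop :=
  (∀ j ∈ F ∪ O, ∀ i : Fin 3, 0 ≤ S j i) ∧
  (∀ i : Fin 3, ∀ j ∈ F ∪ O, ∀ k ∈ F ∪ O, j ≠ k →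
    S j i + jobTime F p q j ≤ S k i ∨ S k i + jobTime F p q k ≤ S j i) ∧
  (∀ j ∈ F ∪ O, ∀ i i' : Fin 3, i ≠ i' →
    S j i + jobTime F p q j ≤ S j i' ∨ S j i' + jobTime F p q j ≤ S j i) ∧
  (∀ j ∈ F, S j 0 + p j ≤ S j 1 ∧ S j 1 + p j ≤ S j 2)

/-- Makespan: supremum of all completion times of the jobs of `F ∪ O`. -/
def makespan {J : Type*} [DecidableEq J] (F O : Finset J) (p q : J → ℝ)
    (S : J → Fin 3 → ℝ) : ℝ :=
  sSup {x : ℝ | ∃ j ∈ F ∪ O, ∃ i : Fin 3, x = S j i + jobTime F p q j}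

/-- The tight-example instance: `ℓ` flow-shop jobs of processing time `1/(ℓ−1)` and
`k+1` open-shop jobs, one of processing time `1` and `k` of processing time `1/(k−1)`. -/
def tightF (ℓ k : ℕ) : Finset (Fin ℓ ⊕ Fin (k + 1)) := Finset.univ.image Sum.inl

def tightO (ℓ k : ℕ) : Finset (Fin ℓ ⊕ Fin (k + 1)) := Finset.univ.image Sum.inr

def tightp (ℓ k : ℕ) : (Fin ℓ ⊕ Fin (k + 1)) → ℝ := fun _ => 1 / ((ℓ : ℝ) - 1)

def tightq (ℓ k : ℕ) : (Fin ℓ ⊕ Fin (k + 1)) → ℝ :=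
  Sum.elim (fun _ => 1) (fun i => if i = 0 then 1 else 1 / ((k : ℝ) - 1))

/-! ### Auxiliary lemmas -/

lemma sum_le_of_disjoint' {J : Type*} [DecidableEq J] :
    ∀ (X : Finset J) (a t : J → ℝ) (M : ℝ), 0 ≤ M →
    (∀ j ∈ X, 0 ≤ a j) → (∀ j ∈ X, 0 < t j) →
    (∀ j ∈ X, ∀ k ∈ X, j ≠ k → a j + t j ≤ a k ∨ a k + t k ≤ a j) →
    (∀ j ∈ X, a j + t j ≤ M) →
    ∑ j ∈ X, t j ≤ M := by
  intro X
  induction X using Finset.strongInduction with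
  | _ X ih =>
    intro a t M hM ha ht hd hc
    rcases X.eq_empty_or_nonempty with rfl | hne
    · simpa using hM
    · obtain ⟨j0, hj0, hmax⟩ := X.exists_max_image a hne
      have h1 : ∀ j ∈ X.erase j0, a j + t j ≤ a j0 := by
        intro j hj
        obtain ⟨hne', hjX⟩ := Finset.mem_erase.mp hj
        rcases hd j hjX j0 hj0 hne' with h | h
        · exact h
        · have := hmax j hjX; nlinarith [ht j0 hj0]
      have h2 : ∑ j ∈ X.erase j0, t j ≤ a j0 :=
        ih (X.erase j0) (Finset.erase_ssubset hj0) a t (a j0) (ha j0 hj0)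
          (fun j hj => ha j (Finset.mem_of_mem_erase hj))
          (fun j hj => ht j (Finset.mem_of_mem_erase hj))
          (fun j hj k hk hne' => hd j (Finset.mem_of_mem_erase hj) k
            (Finset.mem_of_mem_erase hk) hne')
          h1
      have h3 := hc j0 hj0
      have h4 := Finset.add_sum_erase X t hj0
      linarith [h4.symm]

lemma makespan_bddAbove {J : Type*} [DecidableEq J] (F O : Finset J) (p q : J → ℝ)
    (S' : J → Fin 3 → ℝ) :
    BddAbove {x : ℝ | ∃ j ∈ F ∪ O, ∃ i : Fin 3, x = S' j i + jobTime F p q j} := by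
  apply Set.Finite.bddAbove
  apply Set.Finite.subset (Set.finite_range
    (fun pr : (↥(F ∪ O) : Type _) × Fin 3 => S' pr.1.1 pr.2 + jobTime F p q pr.1.1))
  rintro x ⟨j, hj, i, rfl⟩
  exact ⟨(⟨j, hj⟩, i), rfl⟩

lemma lower_bound {J : Type*} [DecidableEq J] (F O : Finset J) (p q : J → ℝ)
    (S' : J → Fin 3 → ℝ) (hdisj : Disjoint F O) (hne : (F ∪ O).Nonempty)
    (hp : ∀ j ∈ F, 0 < p j) (hq : ∀ j ∈ O, 0 < q j)
    (hfeas : Feasible F O p q S') :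
    (∑ j ∈ F, p j) + (∑ j ∈ O, q j) ≤ makespan F O p q S' := by
  obtain ⟨h0, h1, _h2, _h3⟩ := hfeas
  set M := makespan F O p q S' with hMdef
  have hbdd := makespan_bddAbove F O p q S'
  have hle : ∀ j ∈ F ∪ O, S' j 0 + jobTime F p q j ≤ M :=
    fun j hj => le_csSup hbdd ⟨j, hj, 0, rfl⟩
  have htpos : ∀ j ∈ F ∪ O, 0 < jobTime F p q j := by
    intro j hj
    by_cases h : j ∈ F
    · simpa [jobTime, h] using hp j h
    · have hO : j ∈ O := by
        rcases Finset.mem_union.mp hj with h' | h'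
        · exact absurd h' h
        · exact h'
      simpa [jobTime, h] using hq j hO
  have hM0 : 0 ≤ M := by
    obtain ⟨j, hj⟩ := hne
    have := hle j hj; have := h0 j hj 0; have := htpos j hj; linarith
  have key := sum_le_of_disjoint' (F ∪ O) (fun j => S' j 0) (jobTime F p q) M hM0
    (fun j hj => h0 j hj 0) htpos (h1 0) hle
  have hsum : ∑ j ∈ F ∪ O, jobTime F p q j = (∑ j ∈ F, p j) + (∑ j ∈ O, q j) := by
    rw [Finset.sum_union hdisj]
    congr 1
    · exact Finset.sum_congr rfl (fun j hj => by simp [jobTime, hj])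
    · exact Finset.sum_congr rfl (fun j hj => by
        simp [jobTime, Finset.disjoint_right.mp hdisj hj])
  linarith [key, hsum.le, hsum.ge]

/-- The witness schedule. -/
def tightS (ℓ k : ℕ) : (Fin ℓ ⊕ Fin (k + 1)) → Fin 3 → ℝ := fun j =>
  match j with
  | Sum.inl a => ![ (a : ℕ) * (1 / ((ℓ : ℝ) - 1)),
      1 + (a : ℕ) * (1 / ((ℓ : ℝ) - 1)),
      2 + (a : ℕ) * (1 / ((ℓ : ℝ) - 1)) ]
  | Sum.inr b =>
    if (b : ℕ) = 0 then ![2 + 1 / ((ℓ : ℝ) - 1) + 1 / ((k : ℝ) - 1), 0, 1]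
    else if (b : ℕ) = k then
      ![1 + 1 / ((ℓ : ℝ) - 1), 2 + 1 / ((ℓ : ℝ) - 1), 3 + 1 / ((ℓ : ℝ) - 1)]
    else ![1 + 1 / ((ℓ : ℝ) - 1) + (b : ℕ) * (1 / ((k : ℝ) - 1)),
           2 + 1 / ((ℓ : ℝ) - 1) + (b : ℕ) * (1 / ((k : ℝ) - 1)),
           (b : ℕ) * (1 / ((k : ℝ) - 1)) - 1 / ((k : ℝ) - 1)]

lemma jobTime_inl (ℓ k : ℕ) (a : Fin ℓ) :
    jobTime (tightF ℓ k) (tightp ℓ k) (tightq ℓ k) (Sum.inl a) = ((ℓ : ℝ) - 1)⁻¹ := by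
  simp [jobTime, tightF, tightp]

lemma jobTime_inr (ℓ k : ℕ) (b : Fin (k + 1)) :
    jobTime (tightF ℓ k) (tightp ℓ k) (tightq ℓ k) (Sum.inr b)
      = if (b : ℕ) = 0 then 1 else ((k : ℝ) - 1)⁻¹ := by
  simp [jobTime, tightF, tightq]

lemma mem_FO (ℓ k : ℕ) (j : Fin ℓ ⊕ Fin (k + 1)) : j ∈ tightF ℓ k ∪ tightO ℓ k := by
  rcases j with a | b <;> simp [tightF, tightO]

lemma FO_disjoint (ℓ k : ℕ) : Disjoint (tightF ℓ k) (tightO ℓ k) := by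
  simp only [Finset.disjoint_left, tightF, tightO, Finset.mem_image]
  rintro x ⟨a, -, rfl⟩ ⟨b, -, h⟩
  exact Sum.inl_ne_inr h.symm


set_option maxHeartbeats 1200000 in
/-- For the tight-example instance with `ℓ ≥ 2` and `k ≥ 2` there is a feasible schedule
of makespan exactly `P(F) + Q(O) = 3 + 1/(ℓ−1) + 1/(k−1)`, and it is optimal since
every feasible schedule has makespan at least `P(F) + Q(O)`. -/
theorem stmt11 (ℓ k : ℕ) (hℓ : 2 ≤ ℓ) (hk : 2 ≤ k) :
    (∑ j ∈ tightF ℓ k, tightp ℓ k j) + (∑ j ∈ tightO ℓ k, tightq ℓ k j)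
      = 3 + 1 / ((ℓ : ℝ) - 1) + 1 / ((k : ℝ) - 1) ∧
    ∃ S : (Fin ℓ ⊕ Fin (k + 1)) → Fin 3 → ℝ,
      Feasible (tightF ℓ k) (tightO ℓ k) (tightp ℓ k) (tightq ℓ k) S ∧
      makespan (tightF ℓ k) (tightO ℓ k) (tightp ℓ k) (tightq ℓ k) S
        = 3 + 1 / ((ℓ : ℝ) - 1) + 1 / ((k : ℝ) - 1) ∧
      (∀ S' : (Fin ℓ ⊕ Fin (k + 1)) → Fin 3 → ℝ,
        Feasible (tightF ℓ k) (tightO ℓ k) (tightp ℓ k) (tightq ℓ k) S' →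
          (∑ j ∈ tightF ℓ k, tightp ℓ k j) + (∑ j ∈ tightO ℓ k, tightq ℓ k j)
            ≤ makespan (tightF ℓ k) (tightO ℓ k) (tightp ℓ k) (tightq ℓ k) S') ∧
      (∀ S' : (Fin ℓ ⊕ Fin (k + 1)) → Fin 3 → ℝ,
        Feasible (tightF ℓ k) (tightO ℓ k) (tightp ℓ k) (tightq ℓ k) S' →
          makespan (tightF ℓ k) (tightO ℓ k) (tightp ℓ k) (tightq ℓ k) S
            ≤ makespan (tightF ℓ k) (tightO ℓ k) (tightp ℓ k) (tightq ℓ k) S') := by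
  -- basic numeric facts
  have hl2 : (2:ℝ) ≤ (ℓ:ℝ) := by exact_mod_cast hℓ
  have hk2 : (2:ℝ) ≤ (k:ℝ) := by exact_mod_cast hk
  have hlpos : (0:ℝ) < (ℓ:ℝ) - 1 := by linarith
  have hkpos : (0:ℝ) < (k:ℝ) - 1 := by linarith
  have hlne : ((ℓ:ℝ) - 1) ≠ 0 := ne_of_gt hlpos
  have hkne : ((k:ℝ) - 1) ≠ 0 := ne_of_gt hkpos
  have hs0 : (0:ℝ) < ((ℓ:ℝ) - 1)⁻¹ := by positivity
  have hr0 : (0:ℝ) < ((k:ℝ) - 1)⁻¹ := by positivity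
  have hls : ((ℓ:ℝ) - 1) * ((ℓ:ℝ) - 1)⁻¹ = 1 := mul_inv_cancel₀ hlne
  have hkr : ((k:ℝ) - 1) * ((k:ℝ) - 1)⁻¹ = 1 := mul_inv_cancel₀ hkne
  have hs1 : ((ℓ:ℝ) - 1)⁻¹ ≤ 1 := by
    rw [inv_le_one_iff₀]; right; linarith
  have hr1 : ((k:ℝ) - 1)⁻¹ ≤ 1 := by
    rw [inv_le_one_iff₀]; right; linarith
  -- product facts for flow jobs
  have hx0 : ∀ a : Fin ℓ, 0 ≤ ((a:ℕ):ℝ) * ((ℓ:ℝ) - 1)⁻¹ := fun a => by positivity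
  have hxval : ∀ a : Fin ℓ, ((a:ℕ):ℝ) ≤ (ℓ:ℝ) - 1 := by
    intro a
    have h : (a:ℕ) + 1 ≤ ℓ := a.isLt
    have h2 := (Nat.cast_le (α := ℝ)).mpr h
    push_cast at h2
    linarith
  have hx1 : ∀ a : Fin ℓ, ((a:ℕ):ℝ) * ((ℓ:ℝ) - 1)⁻¹ ≤ 1 := by
    intro a
    calc ((a:ℕ):ℝ) * ((ℓ:ℝ) - 1)⁻¹
        ≤ ((ℓ:ℝ) - 1) * ((ℓ:ℝ) - 1)⁻¹ := mul_le_mul_of_nonneg_right (hxval a) hs0.le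
      _ = 1 := hls
  have hxlt : ∀ a a' : Fin ℓ, (a:ℕ) < (a':ℕ) →
      ((a:ℕ):ℝ) * ((ℓ:ℝ) - 1)⁻¹ + ((ℓ:ℝ) - 1)⁻¹ ≤ ((a':ℕ):ℝ) * ((ℓ:ℝ) - 1)⁻¹ := by
    intro a a' h
    have h' : ((a:ℕ):ℝ) + 1 ≤ ((a':ℕ):ℝ) := by exact_mod_cast h
    nlinarith [hs0, mul_le_mul_of_nonneg_right h' hs0.le]
  -- product facts for open jobs
  have hy0 : ∀ b : Fin (k+1), 0 ≤ ((b:ℕ):ℝ) * ((k:ℝ) - 1)⁻¹ := fun b => by positivity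
  have hyr : ∀ b : Fin (k+1), (b:ℕ) ≠ 0 →
      ((k:ℝ) - 1)⁻¹ ≤ ((b:ℕ):ℝ) * ((k:ℝ) - 1)⁻¹ := by
    intro b hb
    have h1 : (1:ℝ) ≤ ((b:ℕ):ℝ) := by exact_mod_cast Nat.one_le_iff_ne_zero.mpr hb
    nlinarith [hr0]
  have hy1 : ∀ b : Fin (k+1), (b:ℕ) ≠ k → ((b:ℕ):ℝ) * ((k:ℝ) - 1)⁻¹ ≤ 1 := by
    intro b hb
    have h3 : (b:ℕ) + 1 ≤ k := by have := b.isLt; omega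
    have h2 := (Nat.cast_le (α := ℝ)).mpr h3
    push_cast at h2
    calc ((b:ℕ):ℝ) * ((k:ℝ) - 1)⁻¹
        ≤ ((k:ℝ) - 1) * ((k:ℝ) - 1)⁻¹ := mul_le_mul_of_nonneg_right (by linarith) hr0.le
      _ = 1 := hkr
  have hylt : ∀ b b' : Fin (k+1), (b:ℕ) < (b':ℕ) →
      ((b:ℕ):ℝ) * ((k:ℝ) - 1)⁻¹ + ((k:ℝ) - 1)⁻¹ ≤ ((b':ℕ):ℝ) * ((k:ℝ) - 1)⁻¹ := by
    intro b b' h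
    have h' : ((b:ℕ):ℝ) + 1 ≤ ((b':ℕ):ℝ) := by exact_mod_cast h
    nlinarith [hr0, mul_le_mul_of_nonneg_right h' hr0.le]
  -- the total sum
  have hsumF : ∑ j ∈ tightF ℓ k, tightp ℓ k j = (ℓ:ℝ) * (1 / ((ℓ:ℝ) - 1)) := by
    rw [tightF, Finset.sum_image (by intro x _ y _ h; exact Sum.inl_injective h)]
    simp [tightp, Finset.sum_const, Finset.card_univ, nsmul_eq_mul]
  have hsumO : ∑ j ∈ tightO ℓ k, tightq ℓ k j = 1 + (k:ℝ) * (1 / ((k:ℝ) - 1)) := by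
    rw [tightO, Finset.sum_image (by intro x _ y _ h; exact Sum.inr_injective h)]
    simp only [tightq, Sum.elim_inr]
    rw [Fin.sum_univ_succ]
    simp [Fin.succ_ne_zero, Finset.sum_const, Finset.card_univ, nsmul_eq_mul]
  have hsum : (∑ j ∈ tightF ℓ k, tightp ℓ k j) + (∑ j ∈ tightO ℓ k, tightq ℓ k j)
      = 3 + 1 / ((ℓ:ℝ) - 1) + 1 / ((k:ℝ) - 1) := by
    rw [hsumF, hsumO]
    field_simp
    ring
  have hk0 : ¬ (k = 0) := by omega
  -- pairwise facts on each machine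
  have hflow2 : ∀ i : Fin 3, ∀ a a' : Fin ℓ, (a:ℕ) < (a':ℕ) →
      tightS ℓ k (Sum.inl a) i + ((ℓ:ℝ) - 1)⁻¹ ≤ tightS ℓ k (Sum.inl a') i := by
    intro i a a' h
    fin_cases i <;> simp [tightS] <;> linarith [hxlt a a' h]
  have hmix : ∀ i : Fin 3, ∀ a : Fin ℓ, ∀ b : Fin (k+1),
      tightS ℓ k (Sum.inl a) i + ((ℓ:ℝ) - 1)⁻¹ ≤ tightS ℓ k (Sum.inr b) i ∨
      tightS ℓ k (Sum.inr b) i + (if (b:ℕ) = 0 then (1:ℝ) else ((k:ℝ) - 1)⁻¹)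
        ≤ tightS ℓ k (Sum.inl a) i := by
    intro i a b
    by_cases hb0 : (b:ℕ) = 0
    · fin_cases i <;> simp [tightS, hb0] <;>
        first
          | (left; linarith [hx1 a, hx0 a, hr0, hs0])
          | (right; linarith [hx1 a, hx0 a, hr0, hs0])
    · by_cases hbk : (b:ℕ) = k
      · fin_cases i <;> simp [tightS, hb0, hbk, hk0] <;>
          first
            | (left; linarith [hx1 a, hx0 a, hr0, hs0])
            | (right; linarith [hx1 a, hx0 a, hr0, hs0])
      · fin_cases i <;> simp [tightS, hb0, hbk, hk0] <;>
          first
            | (left; linarith [hx1 a, hx0 a, hy0 b, hy1 b hbk, hr0, hs0])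
            | (right; linarith [hx1 a, hx0 a, hy0 b, hy1 b hbk, hr0, hs0])
  have hopen2 : ∀ i : Fin 3, ∀ b b' : Fin (k+1), (b:ℕ) < (b':ℕ) →
      tightS ℓ k (Sum.inr b) i + (if (b:ℕ) = 0 then (1:ℝ) else ((k:ℝ) - 1)⁻¹)
        ≤ tightS ℓ k (Sum.inr b') i ∨
      tightS ℓ k (Sum.inr b') i + (if (b':ℕ) = 0 then (1:ℝ) else ((k:ℝ) - 1)⁻¹)
        ≤ tightS ℓ k (Sum.inr b) i := by
    intro i b b' h
    have hb'0 : (b':ℕ) ≠ 0 := by omega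
    by_cases hb0 : (b:ℕ) = 0
    · by_cases hbk' : (b':ℕ) = k
      · fin_cases i <;> simp [tightS, hb0, hb'0, hbk', hk0] <;>
          first
            | (left; linarith [hr0, hs0, hr1, hs1])
            | (right; linarith [hr0, hs0, hr1, hs1])
      · fin_cases i <;> simp [tightS, hb0, hb'0, hbk', hk0] <;>
          first
            | (left; linarith [hy0 b', hy1 b' hbk', hyr b' hb'0, hr0, hs0, hr1, hs1])
            | (right; linarith [hy0 b', hy1 b' hbk', hyr b' hb'0, hr0, hs0, hr1, hs1])
    · have hbk : (b:ℕ) ≠ k := by have := b'.isLt; omega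
      by_cases hbk' : (b':ℕ) = k
      · fin_cases i <;> simp [tightS, hb0, hbk, hb'0, hbk', hk0] <;>
          first
            | (left; linarith [hy0 b, hy1 b hbk, hyr b hb0, hr0, hs0, hr1, hs1])
            | (right; linarith [hy0 b, hy1 b hbk, hyr b hb0, hr0, hs0, hr1, hs1])
      · fin_cases i <;> simp [tightS, hb0, hbk, hb'0, hbk', hk0] <;>
          first
            | (left; linarith [hylt b b' h, hy0 b, hy1 b hbk, hy0 b', hy1 b' hbk', hr0, hs0])
            | (right; linarith [hylt b b' h, hy0 b, hy1 b hbk, hy0 b', hy1 b' hbk', hr0, hs0])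
  -- feasibility of the witness schedule
  have hfeasS : Feasible (tightF ℓ k) (tightO ℓ k) (tightp ℓ k) (tightq ℓ k)
      (tightS ℓ k) := by
    refine ⟨?_, ?_, ?_, ?_⟩
    · rintro (a | b) - i
      · fin_cases i <;> simp [tightS] <;> linarith [hx0 a]
      · by_cases hb0 : (b:ℕ) = 0
        · fin_cases i <;> simp [tightS, hb0] <;> linarith [hs0, hr0]
        · by_cases hbk : (b:ℕ) = k
          · fin_cases i <;> simp [tightS, hb0, hbk, hk0] <;> linarith [hs0, hr0]
          · fin_cases i <;> simp [tightS, hb0, hbk, hk0] <;>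
              linarith [hs0, hr0, hy0 b, hyr b hb0]
    · intro i j hj j' hj' hne
      rcases j with a | b <;> rcases j' with a' | b'
      · have hne' : (a:ℕ) ≠ (a':ℕ) := fun h => hne (by rw [Sum.inl.injEq]; exact Fin.ext h)
        rw [jobTime_inl, jobTime_inl]
        rcases hne'.lt_or_gt with h | h
        · exact Or.inl (hflow2 i a a' h)
        · exact Or.inr (hflow2 i a' a h)
      · rw [jobTime_inl, jobTime_inr]
        exact hmix i a b'
      · rw [jobTime_inl, jobTime_inr]
        exact (hmix i a' b).symm
      · have hne' : (b:ℕ) ≠ (b':ℕ) := fun h => hne (by rw [Sum.inr.injEq]; exact Fin.ext h)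
        rw [jobTime_inr, jobTime_inr]
        rcases hne'.lt_or_gt with h | h
        · exact hopen2 i b b' h
        · exact (hopen2 i b' b h).symm
    · rintro (a | b) - i i' hii'
      · rw [jobTime_inl]
        fin_cases i <;> fin_cases i' <;> (try (exact absurd rfl hii')) <;>
          simp [tightS] <;>
          first
            | (left; linarith [hs1, hx0 a, hx1 a])
            | (right; linarith [hs1, hx0 a, hx1 a])
      · rw [jobTime_inr]
        by_cases hb0 : (b:ℕ) = 0
        · fin_cases i <;> fin_cases i' <;> (try (exact absurd rfl hii')) <;>
            simp [tightS, hb0] <;>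
            first
              | (left; linarith [hs0, hr0, hs1, hr1])
              | (right; linarith [hs0, hr0, hs1, hr1])
        · by_cases hbk : (b:ℕ) = k
          · fin_cases i <;> fin_cases i' <;> (try (exact absurd rfl hii')) <;>
              simp [tightS, hb0, hbk, hk0] <;>
              first
                | (left; linarith [hs0, hr0, hs1, hr1])
                | (right; linarith [hs0, hr0, hs1, hr1])
          · fin_cases i <;> fin_cases i' <;> (try (exact absurd rfl hii')) <;>
              simp [tightS, hb0, hbk, hk0] <;>
              first
                | (left; linarith [hs0, hr0, hs1, hr1, hy0 b, hyr b hb0, hy1 b hbk])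
                | (right; linarith [hs0, hr0, hs1, hr1, hy0 b, hyr b hb0, hy1 b hbk])
    · intro j hj
      simp only [tightF, Finset.mem_image] at hj
      obtain ⟨a, -, rfl⟩ := hj
      constructor <;> simp [tightS, tightp] <;> linarith [hs1, hx0 a]
  -- makespan of the witness schedule
  have hmk : makespan (tightF ℓ k) (tightO ℓ k) (tightp ℓ k) (tightq ℓ k) (tightS ℓ k)
      = 3 + 1 / ((ℓ:ℝ) - 1) + 1 / ((k:ℝ) - 1) := by
    have hgreat : IsGreatest
        {x : ℝ | ∃ j ∈ tightF ℓ k ∪ tightO ℓ k, ∃ i : Fin 3,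
          x = tightS ℓ k j i + jobTime (tightF ℓ k) (tightp ℓ k) (tightq ℓ k) j}
        (3 + 1 / ((ℓ:ℝ) - 1) + 1 / ((k:ℝ) - 1)) := by
      constructor
      · refine ⟨Sum.inr 0, mem_FO ℓ k _, 0, ?_⟩
        rw [jobTime_inr]
        simp [tightS]
        ring
      · rintro x ⟨j, -, i, rfl⟩
        rcases j with a | b
        · rw [jobTime_inl]
          fin_cases i <;> simp [tightS] <;> linarith [hx1 a, hs0, hr0, hs1, hr1]
        · rw [jobTime_inr]
          by_cases hb0 : (b:ℕ) = 0
          · fin_cases i <;> simp [tightS, hb0] <;> linarith [hs0, hr0, hs1, hr1]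
          · by_cases hbk : (b:ℕ) = k
            · fin_cases i <;> simp [tightS, hb0, hbk, hk0] <;> linarith [hs0, hr0, hs1, hr1]
            · fin_cases i <;> simp [tightS, hb0, hbk, hk0] <;>
                linarith [hs0, hr0, hs1, hr1, hy0 b, hy1 b hbk]
    exact hgreat.csSup_eq
  -- lower bound for any feasible schedule
  have hlb : ∀ S' : (Fin ℓ ⊕ Fin (k + 1)) → Fin 3 → ℝ,
      Feasible (tightF ℓ k) (tightO ℓ k) (tightp ℓ k) (tightq ℓ k) S' →
        (∑ j ∈ tightF ℓ k, tightp ℓ k j) + (∑ j ∈ tightO ℓ k, tightq ℓ k j)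
          ≤ makespan (tightF ℓ k) (tightO ℓ k) (tightp ℓ k) (tightq ℓ k) S' := by
    intro S' hfeas
    refine lower_bound (tightF ℓ k) (tightO ℓ k) (tightp ℓ k) (tightq ℓ k) S'
      (FO_disjoint ℓ k) ⟨Sum.inr 0, mem_FO ℓ k _⟩ ?_ ?_ hfeas
    · intro j _
      rw [tightp, one_div]
      exact hs0
    · intro j hj
      simp only [tightO, Finset.mem_image] at hj
      obtain ⟨b, -, rfl⟩ := hj
      simp only [tightq, Sum.elim_inr]
      split_ifs
      · norm_num
      · rw [one_div]; exact hr0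
  exact ⟨hsum, tightS ℓ k, hfeasS, hmk, hlb, fun S' h => by
    rw [hmk, ← hsum]; exact hlb S' h⟩
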